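/- Let R be a semiperfect ring and M a right R-module. If M is hereditarily Bassian, then the socle of M is finitely generated. -/

import Mathlib

/-- A module `M` is *Bassian* if every monomorphism `M → M/N` forces `N = 0`. -/
def IsBassian (R : Type*) [Ring R] (M : Type*) [AddCommGroup M] [Module R M] : Prop :=
  ∀ N : Submodule R M, (∃ f : M →ₗ[R] M ⧸ N, Function.Injective f) → N = ⊥

/-- A module `M` is *super Bassian* if every quotient of `M` is Bassian. -/
def IsSuperBassian (R : Type*) [Ring R] (M : Type*) [AddCommGroup M] [Module R M] : Prop :=
  ∀ K : Submodule R M, IsBassian R (M ⧸ K)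

/-- A module `M` is *hereditarily Bassian* if every submodule of `M` is Bassian. -/
def IsHereditarilyBassian (R : Type*) [Ring R] (M : Type*) [AddCommGroup M] [Module R M] :
    Prop :=
  ∀ N : Submodule R M, IsBassian R N

/-- The *socle* of a module: the sum of all its simple submodules, i.e. the supremum of
the atoms of its submodule lattice. -/
def Socle (R : Type*) [Ring R] (M : Type*) [AddCommGroup M] [Module R M] : Submodule R M :=
  sSup {N : Submodule R M | IsAtom N}

section Aux

variable {R : Type*} [Ring R] {M M₂ : Type*} [AddCommGroup M] [Module R M]
  [AddCommGroup M₂] [Module R M₂]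

/-- Bassian-ness transfers along linear equivalences. -/
theorem IsBassian.congr' (e : M ≃ₗ[R] M₂)
    (hM : ∀ N : Submodule R M, (∃ f : M →ₗ[R] M ⧸ N, Function.Injective f) → N = ⊥) :
    ∀ N : Submodule R M₂, (∃ f : M₂ →ₗ[R] M₂ ⧸ N, Function.Injective f) → N = ⊥ := by
  rintro N ⟨f, hf⟩
  have hmap : (N.comap (e : M →ₗ[R] M₂)).map (e : M →ₗ[R] M₂) = N :=
    Submodule.map_comap_eq_of_surjective e.surjective N
  have q :
      (M ⧸ N.comap (e : M →ₗ[R] M₂)) ≃ₗ[R] (M₂ ⧸ N) :=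
    Submodule.Quotient.equiv _ N e hmap
  have hP : N.comap (e : M →ₗ[R] M₂) = ⊥ := by
    refine hM _ ⟨q.symm.toLinearMap ∘ₗ f ∘ₗ e.toLinearMap, ?_⟩
    exact q.symm.injective.comp (hf.comp e.injective)
  rw [← hmap, hP, Submodule.map_bot]

end Aux

section Aux2

variable {R : Type*} [Ring R] {M : Type*} [AddCommGroup M] [Module R M]

/-- If `M` contains a copy of `S^(ω)` with `S` nonzero, then `M` is not hereditarily Bassian. -/
theorem no_finsupp_embedding {S : Type*} [AddCommGroup S] [Module R S]
    (s₀ : S) (hs₀ : s₀ ≠ 0) (F : (ℕ →₀ S) →ₗ[R] M) (hF : Function.Injective F)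
    (h : ∀ N : Submodule R M,
      ∀ K : Submodule R N, (∃ f : ↥N →ₗ[R] ↥N ⧸ K, Function.Injective f) → K = ⊥) :
    False := by
  classical
  set N := LinearMap.range F with hN
  set E : (ℕ →₀ S) ≃ₗ[R] N := LinearEquiv.ofInjective F hF with hE
  set K : Submodule R N :=
    Submodule.map (E : (ℕ →₀ S) →ₗ[R] N)
      (LinearMap.range (Finsupp.lsingle 0 : S →ₗ[R] ℕ →₀ S)) with hK
  set shift : (ℕ →₀ S) →ₗ[R] (ℕ →₀ S) := Finsupp.lmapDomain S R Nat.succ with hshift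
  have hginj : Function.Injective
      (K.mkQ ∘ₗ (E : (ℕ →₀ S) →ₗ[R] N) ∘ₗ shift ∘ₗ (E.symm : N →ₗ[R] (ℕ →₀ S))) := by
    rw [injective_iff_map_eq_zero]
    intro x hx
    simp only [LinearMap.comp_apply, Submodule.mkQ_apply, Submodule.Quotient.mk_eq_zero] at hx
    rw [hK, Submodule.mem_map] at hx
    obtain ⟨z, ⟨s, rfl⟩, hz⟩ := hx
    have hz' : Finsupp.lsingle (R := R) 0 s = shift (E.symm x) := by
      exact_mod_cast E.injective hz
    have hy : E.symm x = 0 := by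
      ext n
      have h1 : (E.symm x) n = (shift (E.symm x)) (Nat.succ n) := by
        rw [hshift]
        simp only [Finsupp.lmapDomain_apply]
        exact (Finsupp.mapDomain_apply Nat.succ_injective _ n).symm
      rw [h1, ← hz']
      simp only [Finsupp.lsingle_apply, Finsupp.coe_zero, Pi.zero_apply]
      exact Finsupp.single_eq_of_ne' (Nat.succ_ne_zero n).symm
    have := congrArg E hy
    rwa [E.apply_symm_apply, map_zero] at this
  have hKbot : K = ⊥ := h N K ⟨_, hginj⟩
  have hmem : E (Finsupp.single 0 s₀) ∈ K := by
    refine Submodule.mem_map.2 ⟨Finsupp.single 0 s₀, ⟨s₀, rfl⟩, rfl⟩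
  rw [hKbot, Submodule.mem_bot] at hmem
  have : (Finsupp.single 0 s₀ : ℕ →₀ S) = 0 := by
    apply E.injective
    simpa using hmem
  exact hs₀ (Finsupp.single_eq_zero.1 this)

end Aux2

section Aux3

variable {R : Type*} [Ring R]

/-- Every simple `R`-module receives a surjection from `R ⧸ J(R)`. -/
theorem exists_surjective_of_simple {T : Type*} [AddCommGroup T] [Module R T]
    (hT : IsSimpleModule R T) :
    ∃ φ : (R ⧸ (⊥ : Ideal R).jacobson) →ₗ[R] T, Function.Surjective φ := by
  haveI := hT
  haveI : Nontrivial T := IsSimpleModule.nontrivial R T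
  obtain ⟨x, hx⟩ := exists_ne (0 : T)
  set f : R →ₗ[R] T := LinearMap.toSpanSingleton R T x with hf
  have hfsurj : Function.Surjective f := by
    have hr : LinearMap.range f = ⊤ := by
      rw [← LinearMap.span_singleton_eq_range]
      rcases (IsSimpleOrder.eq_bot_or_eq_top (Submodule.span R {x})) with h | h
      · exact absurd (Submodule.span_singleton_eq_bot.1 h) hx
      · exact h
    exact LinearMap.range_eq_top.1 hr
  have hker : (⊥ : Ideal R).jacobson ≤ LinearMap.ker f := by
    apply sInf_le
    refine ⟨bot_le, ?_⟩
    rw [Ideal.isMaximal_def, ← isSimpleModule_iff_isCoatom]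
    exact IsSimpleModule.congr (f.quotKerEquivOfSurjective hfsurj)
  refine ⟨Submodule.liftQ _ f hker, ?_⟩
  intro t
  obtain ⟨r, hr⟩ := hfsurj t
  exact ⟨Submodule.Quotient.mk r, hr⟩

/-- If a simple module is a quotient of `X` and `⊤ = sup` of a finset of atoms of `X`,
then it is isomorphic to one of those atoms. -/
theorem exists_atom_equiv {X T : Type*} [AddCommGroup X] [Module R X]
    [AddCommGroup T] [Module R T] (hT : IsSimpleModule R T)
    (φ : X →ₗ[R] T) (hφ : Function.Surjective φ)
    (b : Finset (Submodule R X)) (hatoms : ∀ B ∈ b, IsAtom B)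
    (hb : (⊤ : Submodule R X) ≤ b.sup id) :
    ∃ B ∈ b, Nonempty (↥B ≃ₗ[R] T) := by
  haveI := hT
  have htop : Submodule.map φ (b.sup id) = ⊤ := by
    rw [top_le_iff.1 hb] at *
    rw [Submodule.map_top, LinearMap.range_eq_top.2 hφ]
  have hex : ∃ B ∈ b, Submodule.map φ B ≠ ⊥ := by
    by_contra hcon
    push_neg at hcon
    have : Submodule.map φ (b.sup id) ≤ ⊥ := by
      rw [Finset.sup_eq_iSup, Submodule.map_iSup]
      refine iSup_le fun B => ?_
      rw [Submodule.map_iSup]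
      refine iSup_le fun hB => ?_
      simpa using le_of_eq (hcon B hB)
    rw [htop] at this
    exact top_ne_bot (le_bot_iff.1 this)
  obtain ⟨B, hBb, hBne⟩ := hex
  haveI : IsSimpleModule R ↥B := isSimpleModule_iff_isAtom.2 (hatoms B hBb)
  set ψ : ↥B →ₗ[R] T := φ ∘ₗ B.subtype with hψ
  have hrange : LinearMap.range ψ = Submodule.map φ B := by
    rw [hψ, LinearMap.range_comp, Submodule.range_subtype]
  have hψsurj : Function.Surjective ψ := by
    rw [← LinearMap.range_eq_top, hrange]
    rcases IsSimpleOrder.eq_bot_or_eq_top (Submodule.map φ B) with h | h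
    · exact absurd h hBne
    · exact h
  have hψinj : Function.Injective ψ := by
    rw [← LinearMap.ker_eq_bot]
    rcases IsSimpleOrder.eq_bot_or_eq_top (LinearMap.ker ψ) with h | h
    · exact h
    · exfalso
      apply hBne
      rw [← hrange, LinearMap.range_eq_bot.2 (LinearMap.ker_eq_top.1 h)]
  exact ⟨B, hBb, ⟨LinearEquiv.ofBijective ψ ⟨hψinj, hψsurj⟩⟩⟩

end Aux3

/-- Over a semiperfect ring (`R/J(R)` semisimple and idempotents lift modulo `J(R)`),
the socle of a hereditarily Bassian module is finitely generated. -/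
theorem socle_fg_of_hereditarilyBassian (R : Type*) [Ring R] (M : Type*) [AddCommGroup M]
    [Module R M]
    (hss : IsSemisimpleModule R (R ⧸ (⊥ : Ideal R).jacobson))
    (hlift : ∀ a : R, a * a - a ∈ (⊥ : Ideal R).jacobson →
      ∃ e : R, e * e = e ∧ e - a ∈ (⊥ : Ideal R).jacobson)
    (h : IsHereditarilyBassian R M) :
    (Socle R M).FG := by
  classical
  set Soc := Socle R M with hSocdef
  have hatom_le : ∀ a : Submodule R M, IsAtom a → a ≤ Soc := fun a ha => le_sSup ha
  -- submodules of `Soc` inherit the hereditarily Bassian property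
  have hHB : ∀ N : Submodule R ↥Soc, ∀ K : Submodule R ↥N,
      (∃ f : ↥N →ₗ[R] ↥N ⧸ K, Function.Injective f) → K = ⊥ := fun N =>
    IsBassian.congr' (Submodule.equivMapOfInjective Soc.subtype Soc.injective_subtype N).symm
      (h (N.map Soc.subtype))
  -- atoms of `M` below `Soc` give atoms of `Soc`
  have hatoms_comap : ∀ a : Submodule R M, IsAtom a → IsAtom (a.comap Soc.subtype) := by
    intro a ha
    rw [← isSimpleModule_iff_isAtom] at ha ⊢
    haveI := ha
    exact IsSimpleModule.congr (Submodule.comapSubtypeEquivOfLe (hatom_le a (by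
      rw [← isSimpleModule_iff_isAtom] at *; exact ha)))
  have hmap_sSup : Submodule.map Soc.subtype (sSup {A : Submodule R ↥Soc | IsAtom A}) = Soc := by
    apply le_antisymm
    · exact (Submodule.map_mono le_top).trans
        (by rw [Submodule.map_top, Submodule.range_subtype])
    · show Socle R M ≤ _
      apply sSup_le
      intro a ha
      have h1 : a = Submodule.map Soc.subtype (a.comap Soc.subtype) := by
        rw [Submodule.map_comap_subtype, inf_eq_right.2 (hatom_le a ha)]
      rw [h1]
      exact Submodule.map_mono (le_sSup (hatoms_comap a ha))
  have htopSoc : sSup {A : Submodule R ↥Soc | IsAtom A} = ⊤ := by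
    apply Submodule.map_injective_of_injective Soc.injective_subtype
    rw [hmap_sSup, Submodule.map_top, Submodule.range_subtype]
  obtain ⟨s, hs_ind, hs_top, hs_atoms⟩ :=
    exists_sSupIndep_of_sSup_atoms_eq_top htopSoc
  by_cases hfin : s.Finite
  · -- finite case: `Soc` is a finite sum of cyclic modules
    have atom_fg : ∀ a ∈ hfin.toFinset, a.FG := by
      intro a ha'
      have ha : IsAtom a := hs_atoms (hfin.mem_toFinset.1 ha')
      obtain ⟨x, hxa, hx0⟩ := (Submodule.ne_bot_iff a).1 ha.1
      have hle : Submodule.span R {x} ≤ a :=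
        Submodule.span_le.2 (Set.singleton_subset_iff.2 hxa)
      have hne : Submodule.span R {x} ≠ ⊥ := fun hcon =>
        hx0 (Submodule.span_singleton_eq_bot.1 hcon)
      exact ⟨{x}, by rw [Finset.coe_singleton]; exact (ha.le_iff.1 hle).resolve_left hne⟩
    have hfg : (⊤ : Submodule R ↥Soc).FG := by
      have h2 : sSup s = hfin.toFinset.sup id := by
        rw [Finset.sup_id_eq_sSup, Set.Finite.coe_toFinset]
      rw [← hs_top, h2]
      exact Submodule.fg_finset_sup _ id atom_fg
    exact (Submodule.fg_top Soc).1 hfg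
  · -- infinite case: derive a contradiction
    exfalso
    haveI := hss
    -- a finite family of atoms of `R ⧸ J` covering `⊤`
    have hRbarfin : Module.Finite R (R ⧸ (⊥ : Ideal R).jacobson) :=
      Module.Finite.of_surjective ((⊥ : Ideal R).jacobson).mkQ (Submodule.mkQ_surjective _)
    have hRbarfg : (⊤ : Submodule R (R ⧸ (⊥ : Ideal R).jacobson)).FG :=
      Module.finite_def.1 hRbarfin
    have hcomp := (Submodule.fg_iff_compact _).1 hRbarfg
    have hatomstop : sSup {a : Submodule R (R ⧸ (⊥ : Ideal R).jacobson) | IsAtom a} = ⊤ := by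
      simpa only [isSimpleModule_iff_isAtom] using IsSemisimpleModule.sSup_simples_eq_top R _
    obtain ⟨b, hb_sub, hb_le⟩ := (CompleteLattice.isCompactElement_iff_exists_le_sSup_of_le_sSup _ _).1 hcomp _ (le_of_eq hatomstop.symm)
    have hb_atoms : ∀ B ∈ b, IsAtom B := fun B hB => hb_sub hB
    -- classification of atoms of `Soc` by the finitely many atoms of `R ⧸ J`
    have key : ∀ A : Submodule R ↥Soc, IsAtom A → ∃ B ∈ b, Nonempty (↥B ≃ₗ[R] ↥A) := by
      intro A hA
      haveI : IsSimpleModule R ↥A := isSimpleModule_iff_isAtom.2 hA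
      obtain ⟨φ, hφ⟩ := exists_surjective_of_simple (R := R) (T := ↥A) inferInstance
      exact exists_atom_equiv inferInstance φ hφ b hb_atoms hb_le
    choose g hg1 hg2 using key
    haveI : Infinite ↥s := Set.infinite_coe_iff.2 hfin
    set cls : ↥s → ↥b := fun x => ⟨g ↑x (hs_atoms x.2), hg1 _ _⟩ with hcls
    obtain ⟨B, hBinf⟩ := Finite.exists_infinite_fiber cls
    haveI := hBinf
    set emb := Infinite.natEmbedding ↥(cls ⁻¹' {B}) with hemb
    set A : ℕ → Submodule R ↥Soc := fun i => ((emb i : ↥s) : Submodule R ↥Soc) with hA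
    have hAinj : Function.Injective A := fun i j hij =>
      emb.injective (Subtype.ext (Subtype.ext hij))
    have hAind : iSupIndep A :=
      ((sSupIndep_iff s).1 hs_ind).comp fun i j hij =>
        emb.injective (Subtype.ext hij)
    have hAeq : ∀ i, g (A i) (hs_atoms (emb i : ↥s).2) = ↑B := by
      intro i
      have := (emb i).2
      simp only [Set.mem_preimage, Set.mem_singleton_iff] at this
      exact congrArg Subtype.val this
    set V : Submodule R (R ⧸ (⊥ : Ideal R).jacobson) := ↑B with hV
    have e : ∀ i : ℕ, ↥V ≃ₗ[R] ↥(A i) := fun i =>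
      (LinearEquiv.ofEq _ _ (hAeq i).symm).trans (hg2 (A i) (hs_atoms (emb i : ↥s).2)).some
    -- a nonzero element of `V`
    haveI : IsSimpleModule R ↥V := isSimpleModule_iff_isAtom.2 (hb_atoms ↑B B.2)
    haveI : Nontrivial ↥V := IsSimpleModule.nontrivial R ↥V
    obtain ⟨s₀, hs₀⟩ := exists_ne (0 : ↥V)
    -- embed `V^(ω)` into `Soc`
    set eqv : (ℕ →₀ ↥V) ≃ₗ[R] (Π₀ i : ℕ, ↥(A i)) :=
      (finsuppLequivDFinsupp R).trans (DFinsupp.mapRange.linearEquiv e) with heqv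
    set L : (Π₀ i : ℕ, ↥(A i)) →ₗ[R] ↥Soc := DFinsupp.lsum ℕ (fun i => (A i).subtype) with hLd
    have hLinj : Function.Injective L := (iSupIndep_iff_dfinsupp_lsum_injective A).1 hAind
    exact no_finsupp_embedding s₀ hs₀ (L ∘ₗ eqv.toLinearMap)
      (hLinj.comp eqv.injective) hHB
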